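/- Let Y and Z be Markov chains on a finite set X with reversible kernels K and L having common stationary distribution π > 0 and common initial distribution π̂. If the two-step chain (Y_{2t}) stochastically dominates (Z_{2t}) at every time (with respect to a partial order on X), π̂/π is non-increasing, and K² is stochastically monotone, then for every t, Σ_i π(i)[P(Y_t=i)/π(i) − 1]² ≤ Σ_i π(i)[P(Z_t=i)/π(i) − 1]². -/

import Mathlib

open Finset

private lemma dom_sum_aux {X : Type*} [Fintype X] [DecidableEq X] [PartialOrder X]
    (p q : X → ℝ)
    (hdom : ∀ D : Finset X, IsLowerSet (D : Set X) → ∑ j ∈ D, p j ≤ ∑ j ∈ D, q j) :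
    ∀ n : ℕ, ∀ f : X → ℝ, (Finset.image f Finset.univ).card ≤ n →
      (∀ i, 0 ≤ f i) → Antitone f →
      ∑ i, f i * p i ≤ ∑ i, f i * q i := by
  intro n
  induction n with
  | zero =>
      intro f hcard hf0 hfa
      have himg : Finset.image f Finset.univ = ∅ := Finset.card_eq_zero.mp (Nat.le_zero.mp hcard)
      have huniv : (Finset.univ : Finset X) = ∅ := Finset.image_eq_empty.mp himg
      rw [huniv]; simp
  | succ n ih =>
      intro f hcard hf0 hfa
      by_cases hX : (Finset.univ : Finset X) = ∅
      · rw [hX]; simp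
      have hne : (Finset.image f Finset.univ).Nonempty :=
        Finset.image_nonempty.mpr (Finset.nonempty_iff_ne_empty.mpr hX)
      set M := (Finset.image f Finset.univ).max' hne with hMdef
      have hMmem : M ∈ Finset.image f Finset.univ := Finset.max'_mem _ hne
      obtain ⟨i₀, -, hfi₀⟩ := Finset.mem_image.mp hMmem
      have hM0 : 0 ≤ M := hfi₀ ▸ hf0 i₀
      have hle : ∀ i, f i ≤ M := fun i =>
        Finset.le_max' _ _ (Finset.mem_image_of_mem f (Finset.mem_univ i))
      by_cases hrest : ((Finset.image f Finset.univ).erase M).Nonempty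
      · set M₂ := ((Finset.image f Finset.univ).erase M).max' hrest with hM₂def
        have hM₂mem : M₂ ∈ (Finset.image f Finset.univ).erase M := Finset.max'_mem _ hrest
        have hM₂img : M₂ ∈ Finset.image f Finset.univ := Finset.mem_of_mem_erase hM₂mem
        obtain ⟨i₂, -, hfi₂⟩ := Finset.mem_image.mp hM₂img
        have hM₂ne : M₂ ≠ M := Finset.ne_of_mem_erase hM₂mem
        have hM₂lt : M₂ < M := lt_of_le_of_ne (Finset.le_max' _ _ hM₂img) hM₂ne
        have hM₂0 : 0 ≤ M₂ := hfi₂ ▸ hf0 i₂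
        set D := Finset.univ.filter (fun i => M ≤ f i) with hDdef
        have hD : IsLowerSet (D : Set X) := by
          intro a b hba hb
          simp only [hDdef, Finset.coe_filter, Set.mem_setOf_eq, Finset.mem_univ,
            true_and] at hb ⊢
          exact le_trans hb (hfa hba)
        set g := fun i => min (f i) M₂ with hgdef
        have hg0 : ∀ i, 0 ≤ g i := fun i => le_min (hf0 i) hM₂0
        have hga : Antitone g := fun a b hab => min_le_min (hfa hab) le_rfl
        have hgval : ∀ i, (M ≤ f i → g i = M₂) ∧ (¬ M ≤ f i → g i = f i) := by
          intro i
          constructor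
          · intro h
            have : f i = M := le_antisymm (hle i) h
            simp [hgdef, this, min_eq_right hM₂lt.le]
          · intro h
            have hfiM : f i ≠ M := fun e => h (e.ge)
            have : f i ≤ M₂ := Finset.le_max' _ _
              (Finset.mem_erase.mpr ⟨hfiM, Finset.mem_image_of_mem f (Finset.mem_univ i)⟩)
            simp [hgdef, min_eq_left this]
        have himg : Finset.image g Finset.univ ⊆ (Finset.image f Finset.univ).erase M := by
          intro x hx
          obtain ⟨i, -, hgi⟩ := Finset.mem_image.mp hx
          by_cases h : M ≤ f i
          · rw [(hgval i).1 h] at hgi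
            exact hgi ▸ hM₂mem
          · rw [(hgval i).2 h] at hgi
            have hfiM : f i ≠ M := fun e => h (e.ge)
            exact hgi ▸ Finset.mem_erase.mpr ⟨hfiM, Finset.mem_image_of_mem f (Finset.mem_univ i)⟩
        have hcard' : (Finset.image g Finset.univ).card ≤ n := by
          have h1 := Finset.card_le_card himg
          have h2 : ((Finset.image f Finset.univ).erase M).card
              = (Finset.image f Finset.univ).card - 1 := Finset.card_erase_of_mem hMmem
          have h3 : 1 ≤ (Finset.image f Finset.univ).card := Finset.card_pos.mpr hne
          omega
        have hdecomp : ∀ i, f i = (M - M₂) * (if i ∈ D then (1:ℝ) else 0) + g i := by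
          intro i
          by_cases h : M ≤ f i
          · have hfM : f i = M := le_antisymm (hle i) h
            have hiD : i ∈ D := by simp [hDdef, h]
            rw [(hgval i).1 h, if_pos hiD, hfM]; ring
          · have hiD : i ∉ D := by simp [hDdef, h]
            rw [(hgval i).2 h, if_neg hiD]; ring
        have hsplit : ∀ r : X → ℝ,
            ∑ i, f i * r i = (M - M₂) * ∑ i ∈ D, r i + ∑ i, g i * r i := by
          intro r
          have : ∀ i ∈ Finset.univ, f i * r i
              = (M - M₂) * (if i ∈ D then r i else 0) + g i * r i := by
            intro i _
            rw [hdecomp i]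
            by_cases h : i ∈ D <;> simp [h] <;> ring
          rw [Finset.sum_congr rfl this, Finset.sum_add_distrib, Finset.mul_sum]
          congr 1
          simp only [mul_ite, mul_zero]
          rw [Finset.sum_ite_mem, Finset.univ_inter]
        rw [hsplit p, hsplit q]
        have h1 : (M - M₂) * ∑ i ∈ D, p i ≤ (M - M₂) * ∑ i ∈ D, q i :=
          mul_le_mul_of_nonneg_left (hdom D hD) (by linarith)
        exact add_le_add h1 (ih g hcard' hg0 hga)
      · -- f is constant equal to M
        have hconst : ∀ i, f i = M := by
          intro i
          by_contra h
          exact hrest ⟨f i, Finset.mem_erase.mpr ⟨h, Finset.mem_image_of_mem f (Finset.mem_univ i)⟩⟩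
        have huniv : IsLowerSet ((Finset.univ : Finset X) : Set X) := by
          rw [Finset.coe_univ]; exact isLowerSet_univ
        calc ∑ i, f i * p i = M * ∑ i, p i := by
              rw [Finset.mul_sum]; exact Finset.sum_congr rfl fun i _ => by rw [hconst i]
          _ ≤ M * ∑ i, q i := mul_le_mul_of_nonneg_left (hdom Finset.univ huniv) hM0
          _ = ∑ i, f i * q i := by
              rw [Finset.mul_sum]; exact Finset.sum_congr rfl fun i _ => by rw [hconst i]

private lemma dom_sum {X : Type*} [Fintype X] [DecidableEq X] [PartialOrder X]
    (p q : X → ℝ)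
    (hdom : ∀ D : Finset X, IsLowerSet (D : Set X) → ∑ j ∈ D, p j ≤ ∑ j ∈ D, q j)
    (f : X → ℝ) (hf0 : ∀ i, 0 ≤ f i) (hfa : Antitone f) :
    ∑ i, f i * p i ≤ ∑ i, f i * q i :=
  dom_sum_aux p q hdom _ f le_rfl hf0 hfa

private lemma pow_rowsum {X : Type*} [Fintype X] [DecidableEq X]
    (K : Matrix X X ℝ) (hKrow : ∀ i, ∑ j, K i j = 1) :
    ∀ t : ℕ, ∀ i, ∑ j, (K ^ t) i j = 1 := by
  intro t
  induction t with
  | zero => intro i; simp [Matrix.one_apply]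
  | succ t ih =>
      intro i
      rw [pow_succ]
      simp only [Matrix.mul_apply]
      rw [Finset.sum_comm]
      calc ∑ k, ∑ j, (K ^ t) i k * K k j = ∑ k, (K ^ t) i k * ∑ j, K k j := by
            exact Finset.sum_congr rfl fun k _ => (Finset.mul_sum _ _ _).symm
        _ = 1 := by
            simp only [hKrow, mul_one]; exact ih i

private lemma pow_rev {X : Type*} [Fintype X] [DecidableEq X]
    (π : X → ℝ) (K : Matrix X X ℝ) (hKrev : ∀ i j, π i * K i j = π j * K j i) :
    ∀ t : ℕ, ∀ i j, π i * (K ^ t) i j = π j * (K ^ t) j i := by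
  intro t
  induction t with
  | zero =>
      intro i j
      by_cases h : i = j
      · subst h; rfl
      · simp [Matrix.one_apply, h, Ne.symm h]
  | succ t ih =>
      intro i j
      conv_lhs => rw [pow_succ]
      conv_rhs => rw [pow_succ']
      simp only [Matrix.mul_apply, Finset.mul_sum]
      apply Finset.sum_congr rfl
      intro k _
      calc π i * ((K ^ t) i k * K k j) = (π i * (K ^ t) i k) * K k j := by ring
        _ = (π k * (K ^ t) k i) * K k j := by rw [ih i k]
        _ = (π k * K k j) * (K ^ t) k i := by ring
        _ = (π j * K j k) * (K ^ t) k i := by rw [hKrev k j]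
        _ = π j * (K j k * (K ^ t) k i) := by ring

private lemma chi_identity {X : Type*} [Fintype X] [DecidableEq X]
    (π πhat : X → ℝ) (hπpos : ∀ i, 0 < π i) (hπ1 : ∑ i, π i = 1)
    (hπhat1 : ∑ i, πhat i = 1)
    (K : Matrix X X ℝ) (hKrow : ∀ i, ∑ j, K i j = 1)
    (hKrev : ∀ i j, π i * K i j = π j * K j i) (t : ℕ) :
    ∑ i, π i * (Matrix.vecMul πhat (K ^ t) i / π i - 1) ^ 2
      = ∑ j, (πhat j / π j) * Matrix.vecMul πhat (K ^ (2 * t)) j - 1 := by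
  set a := Matrix.vecMul πhat (K ^ t) with ha
  have haval : ∀ i, a i = ∑ j, πhat j * (K ^ t) j i := by
    intro i; simp [ha, Matrix.vecMul, dotProduct]
  have hasum : ∑ i, a i = 1 := by
    calc ∑ i, a i = ∑ i, ∑ j, πhat j * (K ^ t) j i := Finset.sum_congr rfl fun i _ => haval i
      _ = ∑ j, ∑ i, πhat j * (K ^ t) j i := Finset.sum_comm
      _ = ∑ j, πhat j * ∑ i, (K ^ t) j i := Finset.sum_congr rfl fun j _ => (Finset.mul_sum _ _ _).symm
      _ = 1 := by simp only [pow_rowsum K hKrow t, mul_one, hπhat1]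
  have hterm : ∀ i, π i * (a i / π i - 1) ^ 2 = a i ^ 2 / π i - 2 * a i + π i := by
    intro i
    have hne : π i ≠ 0 := (hπpos i).ne'
    field_simp
    ring
  have hstep1 : ∑ i, π i * (a i / π i - 1) ^ 2 = (∑ i, a i ^ 2 / π i) - 1 := by
    rw [Finset.sum_congr rfl fun i _ => hterm i]
    rw [Finset.sum_add_distrib, Finset.sum_sub_distrib, ← Finset.mul_sum, hasum, hπ1]
    ring
  have hratio_sum : ∀ i, a i / π i = ∑ j, (πhat j / π j) * (K ^ t) i j := by
    intro i
    rw [haval i, Finset.sum_div]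
    apply Finset.sum_congr rfl
    intro j _
    have hπi : π i ≠ 0 := (hπpos i).ne'
    have hπj : π j ≠ 0 := (hπpos j).ne'
    have hrev := pow_rev π K hKrev t j i
    field_simp
    calc πhat j * (K ^ t) j i * π j = πhat j * (π j * (K ^ t) j i) := by ring
      _ = πhat j * (π i * (K ^ t) i j) := by rw [hrev]
      _ = πhat j * (K ^ t) i j * π i := by ring
      _ = πhat j * π i * (K ^ t) i j := by ring
  have hstep2 : ∑ i, a i ^ 2 / π i = ∑ j, (πhat j / π j) * Matrix.vecMul πhat (K ^ (2 * t)) j := by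
    have h1 : ∀ i, a i ^ 2 / π i = ∑ j, (πhat j / π j) * (a i * (K ^ t) i j) := by
      intro i
      have : a i ^ 2 / π i = a i * (a i / π i) := by
        rw [sq]; ring
      rw [this, hratio_sum i, Finset.mul_sum]
      exact Finset.sum_congr rfl fun j _ => by ring
    rw [Finset.sum_congr rfl fun i _ => h1 i, Finset.sum_comm]
    apply Finset.sum_congr rfl
    intro j _
    rw [← Finset.mul_sum]
    congr 1
    have hpow : K ^ (2 * t) = K ^ t * K ^ t := by
      rw [two_mul, pow_add]
    rw [hpow, ← Matrix.vecMul_vecMul]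
    simp [Matrix.vecMul, dotProduct, ha]
  rw [hstep1, hstep2]

theorem stmt_6 {X : Type*} [Fintype X] [DecidableEq X] [PartialOrder X]
    (π πhat : X → ℝ) (hπpos : ∀ i, 0 < π i) (hπ1 : ∑ i, π i = 1)
    (hπhatnn : ∀ i, 0 ≤ πhat i) (hπhat1 : ∑ i, πhat i = 1)
    (K L : Matrix X X ℝ)
    (hKnn : ∀ i j, 0 ≤ K i j) (hKrow : ∀ i, ∑ j, K i j = 1)
    (hKrev : ∀ i j, π i * K i j = π j * K j i)
    (hLnn : ∀ i j, 0 ≤ L i j) (hLrow : ∀ i, ∑ j, L i j = 1)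
    (hLrev : ∀ i j, π i * L i j = π j * L j i)
    (hratio : Antitone (fun i => πhat i / π i))
    -- K² is stochastically monotone
    (hK2Mono : ∀ f : X → ℝ, (∀ i, 0 ≤ f i) → Antitone f →
      Antitone ((K * K).mulVec f))
    -- the two-step chain (Y_{2t}) stochastically dominates (Z_{2t})
    (hdom : ∀ t : ℕ, ∀ D : Finset X, IsLowerSet (D : Set X) →
      ∑ j ∈ D, Matrix.vecMul πhat (K ^ (2 * t)) j ≤
        ∑ j ∈ D, Matrix.vecMul πhat (L ^ (2 * t)) j) :
    ∀ t : ℕ,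
      ∑ i, π i * (Matrix.vecMul πhat (K ^ t) i / π i - 1) ^ 2 ≤
      ∑ i, π i * (Matrix.vecMul πhat (L ^ t) i / π i - 1) ^ 2 := by
  intro t
  rw [chi_identity π πhat hπpos hπ1 hπhat1 K hKrow hKrev t,
      chi_identity π πhat hπpos hπ1 hπhat1 L hLrow hLrev t]
  apply sub_le_sub_right
  exact dom_sum _ _ (hdom t) (fun j => πhat j / π j)
    (fun i => div_nonneg (hπhatnn i) (hπpos i).le) hratio
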